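/- Let A ∈ F^{m×m}, b ∈ F^{m×1} a column vector, c ∈ F^{1×m} a row vector over a field F. If rank(A) + 1 = rank [A b] = rank [A; c] (column-augmented and row-augmented matrices respectively), then rank(A + b·c) = rank(A) + 1. -/

import Mathlib

open Matrix

lemma range_fromColumns_aux {F : Type*} [Field F] {m : ℕ}
    (A : Matrix (Fin m) (Fin m) F) (b : Matrix (Fin m) (Fin 1) F) :
    LinearMap.range (fromCols A b).mulVecLin =
      LinearMap.range A.mulVecLin ⊔ LinearMap.range b.mulVecLin := by
  apply le_antisymm
  · rintro _ ⟨v, rfl⟩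
    have hv : v = Sum.elim (v ∘ Sum.inl) (v ∘ Sum.inr) := by
      ext (i | i) <;> rfl
    rw [Matrix.mulVecLin_apply, hv, fromCols_mulVec_sumElim]
    exact Submodule.add_mem_sup ⟨_, rfl⟩ ⟨_, rfl⟩
  · rw [sup_le_iff]
    constructor
    · rintro _ ⟨v, rfl⟩
      refine ⟨Sum.elim v 0, ?_⟩
      simp [Matrix.mulVecLin_apply]
    · rintro _ ⟨v, rfl⟩
      refine ⟨Sum.elim 0 v, ?_⟩
      simp [Matrix.mulVecLin_apply]

theorem stmt_1 {F : Type*} [Field F] {m : ℕ}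
    (A : Matrix (Fin m) (Fin m) F) (b : Matrix (Fin m) (Fin 1) F)
    (c : Matrix (Fin 1) (Fin m) F)
    (hb : A.rank + 1 = (fromCols A b).rank)
    (hc : A.rank + 1 = (fromRows A c).rank) :
    (A + b * c).rank = A.rank + 1 := by
  -- there exists x with A x = 0 and c x ≠ 0
  have hx : ∃ x : Fin m → F, A.mulVec x = 0 ∧ c.mulVec x ≠ 0 := by
    by_contra h
    push_neg at h
    have hker : LinearMap.ker (fromRows A c).mulVecLin = LinearMap.ker A.mulVecLin := by
      ext x
      simp only [LinearMap.mem_ker, Matrix.mulVecLin_apply, fromRows_mulVec]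
      constructor
      · intro hx
        have := congrArg (fun f => f ∘ Sum.inl) hx
        ext i
        exact congrFun this i
      · intro hx
        have hcx := h x hx
        rw [hx, hcx]
        ext (i | i) <;> simp
    have h1 : (fromRows A c).rank = A.rank := by
      have e1 := LinearMap.finrank_range_add_finrank_ker (fromRows A c).mulVecLin
      have e2 := LinearMap.finrank_range_add_finrank_ker A.mulVecLin
      rw [hker] at e1
      have : (fromRows A c).rank + Module.finrank F (LinearMap.ker A.mulVecLin)
          = A.rank + Module.finrank F (LinearMap.ker A.mulVecLin) := by
        rw [Matrix.rank, Matrix.rank, e1, e2]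
      omega
    rw [h1] at hc
    omega
  obtain ⟨x, hAx, hcx⟩ := hx
  set V := LinearMap.range (A + b * c).mulVecLin with hV
  have hbcx : (A + b * c).mulVec x = b.mulVec (c.mulVec x) := by
    rw [Matrix.add_mulVec, hAx, zero_add, ← Matrix.mulVec_mulVec]
  have ht : (c.mulVec x) 0 ≠ 0 := by
    intro h0
    apply hcx
    ext i
    have : i = 0 := Subsingleton.elim i 0
    rw [this]; exact h0
  -- range of b ≤ V
  have hbV : LinearMap.range b.mulVecLin ≤ V := by
    rintro _ ⟨y, rfl⟩
    have hy : y = (y 0 * ((c.mulVec x) 0)⁻¹) • (c.mulVec x) := by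
      ext i
      have : i = 0 := Subsingleton.elim i 0
      rw [this]
      simp [Pi.smul_apply, smul_eq_mul, mul_assoc, inv_mul_cancel₀ ht]
    rw [Matrix.mulVecLin_apply, hy, Matrix.mulVec_smul, ← hbcx]
    exact Submodule.smul_mem _ _ ⟨x, rfl⟩
  have hAV : LinearMap.range A.mulVecLin ≤ V := by
    rintro _ ⟨z, rfl⟩
    have : A.mulVec z = (A + b * c).mulVec z - b.mulVec (c.mulVec z) := by
      rw [Matrix.add_mulVec, Matrix.mulVec_mulVec]
      ring_nf
    rw [Matrix.mulVecLin_apply, this]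
    exact Submodule.sub_mem _ ⟨z, rfl⟩ (hbV ⟨c.mulVec z, rfl⟩)
  have hVle : V ≤ LinearMap.range A.mulVecLin ⊔ LinearMap.range b.mulVecLin := by
    rintro _ ⟨z, rfl⟩
    rw [Matrix.mulVecLin_apply, Matrix.add_mulVec, ← Matrix.mulVec_mulVec]
    exact Submodule.add_mem_sup ⟨z, rfl⟩ ⟨c.mulVec z, rfl⟩
  have hVeq : V = LinearMap.range A.mulVecLin ⊔ LinearMap.range b.mulVecLin :=
    le_antisymm hVle (sup_le hAV hbV)
  have : (A + b * c).rank = (fromCols A b).rank := by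
    rw [Matrix.rank, Matrix.rank, range_fromColumns_aux, ← hVeq]
  rw [this, ← hb]
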